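/- Let α, β ∈ (0,1) with β ≤ α. Under the two-piece environment P_{α,β}, for every pair (b_c, b_s) ∈ {-1,1}², the event {B_c = b_c, B_s = b_s} has positive probability and P(Y = b_s | B_c = b_c, B_s = b_s) ≥ P(Y = b_c | B_c = b_c, B_s = b_s); moreover the inequality is strict whenever b_c ≠ b_s and β < α. That is, when the spurious correlation is at least as strong as the invariant one, the Bayes-optimal predictor of Y from the pair (B_c, B_s) outputs the spurious bit B_s. -/

import Mathlib

open MeasureTheory
open scoped ENNReal

/-- The Rademacher-type measure `Rad(γ)` on `ℤ`, putting mass `γ` on `-1` and `1-γ` on `1`. -/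
noncomputable def radMeas (γ : ℝ) : Measure ℤ :=
  ENNReal.ofReal γ • Measure.dirac (-1) + ENNReal.ofReal (1 - γ) • Measure.dirac 1

/-- The two-piece environment `P_{α,β}`: the joint law of `(Y, Y·R_c, Y·R_s)` where
`Y ~ Rad(1/2)` (uniform on `{-1,1}`), `R_c ~ Rad(α)`, `R_s ~ Rad(β)`, mutually independent. -/
noncomputable def twoPiece (α β : ℝ) : Measure (ℤ × ℤ × ℤ) :=
  Measure.map (fun t : ℤ × ℤ × ℤ => (t.1, t.1 * t.2.1, t.1 * t.2.2))
    ((radMeas (1 / 2)).prod ((radMeas α).prod (radMeas β)))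

lemma mySmulProd (c : ℝ≥0∞) {α β : Type*} [MeasurableSpace α] [MeasurableSpace β]
    (μ : Measure α) (ν : Measure β) [SFinite μ] [SFinite ν] :
    (c • μ).prod ν = c • μ.prod ν := by
  ext s hs
  rw [Measure.prod_apply hs, Measure.smul_apply, Measure.prod_apply hs,
    lintegral_smul_measure, smul_eq_mul]

lemma myProdSmul (c : ℝ≥0∞) {α β : Type*} [MeasurableSpace α] [MeasurableSpace β]
    (μ : Measure α) (ν : Measure β) [SFinite μ] [SFinite ν] :
    μ.prod (c • ν) = c • μ.prod ν := by
  ext s hs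
  rw [Measure.prod_apply hs, Measure.smul_apply, Measure.prod_apply hs, smul_eq_mul,
    ← lintegral_const_mul c (measurable_measure_prodMk_left hs)]
  simp

set_option maxHeartbeats 1000000 in
lemma twoPiece_eq (α β : ℝ) : twoPiece α β =
    (ENNReal.ofReal β * ENNReal.ofReal α * ENNReal.ofReal (1/2)) • Measure.dirac ((-1,1,1) : ℤ×ℤ×ℤ) +
      (ENNReal.ofReal β * ENNReal.ofReal α * ENNReal.ofReal (1/2)) • Measure.dirac ((1,-1,-1) : ℤ×ℤ×ℤ) +
      ((ENNReal.ofReal β * ENNReal.ofReal (1-α) * ENNReal.ofReal (1/2)) • Measure.dirac ((-1,-1,1) : ℤ×ℤ×ℤ) +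
        (ENNReal.ofReal β * ENNReal.ofReal (1-α) * ENNReal.ofReal (1/2)) • Measure.dirac ((1,1,-1) : ℤ×ℤ×ℤ)) +
      ((ENNReal.ofReal (1-β) * ENNReal.ofReal α * ENNReal.ofReal (1/2)) • Measure.dirac ((-1,1,-1) : ℤ×ℤ×ℤ) +
        (ENNReal.ofReal (1-β) * ENNReal.ofReal α * ENNReal.ofReal (1/2)) • Measure.dirac ((1,-1,1) : ℤ×ℤ×ℤ) +
        ((ENNReal.ofReal (1-β) * ENNReal.ofReal (1-α) * ENNReal.ofReal (1/2)) • Measure.dirac ((-1,-1,-1) : ℤ×ℤ×ℤ) +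
          (ENNReal.ofReal (1-β) * ENNReal.ofReal (1-α) * ENNReal.ofReal (1/2)) • Measure.dirac ((1,1,1) : ℤ×ℤ×ℤ))) := by
  have hf : Measurable (fun t : ℤ × ℤ × ℤ => (t.1, t.1 * t.2.1, t.1 * t.2.2)) :=
    measurable_of_countable _
  rw [twoPiece, radMeas, radMeas, radMeas]
  simp only [Measure.prod_add, Measure.add_prod, mySmulProd, myProdSmul,
    Measure.dirac_prod_dirac, smul_add, smul_smul]
  rw [Measure.map_add _ _ hf, Measure.map_add _ _ hf, Measure.map_add _ _ hf,
    Measure.map_add _ _ hf, Measure.map_add _ _ hf, Measure.map_add _ _ hf,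
    Measure.map_add _ _ hf]
  simp only [Measure.map_smul, Measure.map_dirac' hf]
  norm_num

lemma keyIneq (a b : ℝ≥0∞) (ha : a ≠ ⊤) (hb0 : b ≠ 0) (hbt : b ≠ ⊤) :
    0 < a + b ∧ (a ≤ b → (a+b)⁻¹ * a ≤ (a+b)⁻¹ * b) ∧
      (a < b → (a+b)⁻¹ * a < (a+b)⁻¹ * b) := by
  have hpos : 0 < a + b := lt_of_lt_of_le (pos_iff_ne_zero.mpr hb0) (self_le_add_left b a)
  refine ⟨hpos, fun h => mul_le_mul_right h _, fun h => ?_⟩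
  have h0 : (a+b)⁻¹ ≠ 0 := ENNReal.inv_ne_zero.mpr (ENNReal.add_ne_top.mpr ⟨ha, hbt⟩)
  have ht : (a+b)⁻¹ ≠ ⊤ := ENNReal.inv_ne_top.mpr hpos.ne'
  exact (ENNReal.mul_lt_mul_iff_right h0 ht).mpr h

/-- when the spurious correlation is at least as strong as the invariant one
(`β ≤ α`), every pair of coordinate values has positive probability and the Bayes-optimal
prediction of the label from the pair of coordinates is the spurious bit, strictly so when
the bits disagree and `β < α`. -/
theorem twoPiece_bayes_spurious (α β : ℝ) (hα : α ∈ Set.Ioo (0 : ℝ) 1)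
    (hβ : β ∈ Set.Ioo (0 : ℝ) 1) (hle : β ≤ α)
    (bc bs : ℤ) (hbc : bc = -1 ∨ bc = 1) (hbs : bs = -1 ∨ bs = 1) :
    0 < twoPiece α β {t : ℤ × ℤ × ℤ | t.2.1 = bc ∧ t.2.2 = bs} ∧
    ProbabilityTheory.cond (twoPiece α β) {t : ℤ × ℤ × ℤ | t.2.1 = bc ∧ t.2.2 = bs}
        {t : ℤ × ℤ × ℤ | t.1 = bc} ≤
      ProbabilityTheory.cond (twoPiece α β) {t : ℤ × ℤ × ℤ | t.2.1 = bc ∧ t.2.2 = bs}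
        {t : ℤ × ℤ × ℤ | t.1 = bs} ∧
    (bc ≠ bs → β < α →
      ProbabilityTheory.cond (twoPiece α β) {t : ℤ × ℤ × ℤ | t.2.1 = bc ∧ t.2.2 = bs}
          {t : ℤ × ℤ × ℤ | t.1 = bc} <
        ProbabilityTheory.cond (twoPiece α β) {t : ℤ × ℤ × ℤ | t.2.1 = bc ∧ t.2.2 = bs}
          {t : ℤ × ℤ × ℤ | t.1 = bs}) := by
  obtain ⟨hα0, hα1⟩ := hα
  obtain ⟨hβ0, hβ1⟩ := hβ
  have hS : ∀ S : Set (ℤ×ℤ×ℤ), MeasurableSet S := fun S => (Set.to_countable S).measurableSet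
  have h1α : (0:ℝ) < 1 - α := by linarith
  have h1β : (0:ℝ) < 1 - β := by linarith
  have hmulpos : ∀ x y : ℝ, 0 < x → 0 < y →
      (0:ℝ≥0∞) < ENNReal.ofReal x * ENNReal.ofReal y * ENNReal.ofReal (1/2) := by
    intro x y hx hy
    exact ENNReal.mul_pos
      (ENNReal.mul_pos (ENNReal.ofReal_pos.mpr hx).ne' (ENNReal.ofReal_pos.mpr hy).ne').ne'
      (ENNReal.ofReal_pos.mpr (by norm_num)).ne'
  have hnetop : ∀ x y : ℝ,
      (ENNReal.ofReal x * ENNReal.ofReal y * ENNReal.ofReal (1/2)) ≠ ⊤ := fun x y =>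
    ENNReal.mul_ne_top (ENNReal.mul_ne_top ENNReal.ofReal_ne_top ENNReal.ofReal_ne_top)
      ENNReal.ofReal_ne_top
  -- the two key coefficients in the disagreeing cases
  set a : ℝ≥0∞ := ENNReal.ofReal β * ENNReal.ofReal (1-α) * ENNReal.ofReal (1/2) with ha_def
  set b : ℝ≥0∞ := ENNReal.ofReal (1-β) * ENNReal.ofReal α * ENNReal.ofReal (1/2) with hb_def
  have ea : a = ENNReal.ofReal (β*(1-α)*(1/2)) := by
    rw [ENNReal.ofReal_mul (mul_nonneg hβ0.le h1α.le), ENNReal.ofReal_mul hβ0.le]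
  have eb : b = ENNReal.ofReal ((1-β)*α*(1/2)) := by
    rw [ENNReal.ofReal_mul (mul_nonneg h1β.le hα0.le), ENNReal.ofReal_mul h1β.le]
  have hab : a ≤ b := by
    rw [ea, eb]; exact ENNReal.ofReal_le_ofReal (by nlinarith)
  have hab' : β < α → a < b := by
    intro hlt
    rw [ea, eb]
    exact (ENNReal.ofReal_lt_ofReal_iff (by nlinarith)).mpr (by nlinarith)
  obtain ⟨hkey1, hkey2, hkey3⟩ :=
    keyIneq a b (hnetop _ _) (hmulpos _ _ h1β hα0).ne' (hnetop _ _)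
  rcases hbc with rfl | rfl <;> rcases hbs with rfl | rfl
  · -- bc = -1, bs = -1
    refine ⟨?_, le_refl _, fun h _ => absurd rfl h⟩
    have : twoPiece α β {t : ℤ × ℤ × ℤ | t.2.1 = -1 ∧ t.2.2 = -1}
        = ENNReal.ofReal β * ENNReal.ofReal α * ENNReal.ofReal (1/2)
          + ENNReal.ofReal (1-β) * ENNReal.ofReal (1-α) * ENNReal.ofReal (1/2) := by
      rw [twoPiece_eq]
      simp only [Measure.add_apply, Measure.smul_apply, Measure.dirac_apply, smul_eq_mul,
        Set.indicator_apply, Set.mem_setOf_eq]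
      norm_num
    rw [this]
    exact lt_of_lt_of_le (hmulpos _ _ hβ0 hα0) le_self_add
  · -- bc = -1, bs = 1
    have hSval : twoPiece α β {t : ℤ × ℤ × ℤ | t.2.1 = -1 ∧ t.2.2 = 1} = a + b := by
      rw [twoPiece_eq, ha_def, hb_def]
      simp only [Measure.add_apply, Measure.smul_apply, Measure.dirac_apply, smul_eq_mul,
        Set.indicator_apply, Set.mem_setOf_eq]
      norm_num
    have hc : twoPiece α β ({t : ℤ × ℤ × ℤ | t.2.1 = -1 ∧ t.2.2 = 1}
        ∩ {t : ℤ × ℤ × ℤ | t.1 = -1}) = a := by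
      rw [twoPiece_eq, ha_def]
      simp only [Measure.add_apply, Measure.smul_apply, Measure.dirac_apply, smul_eq_mul,
        Set.indicator_apply, Set.mem_setOf_eq, Set.mem_inter_iff]
      norm_num
    have hsv : twoPiece α β ({t : ℤ × ℤ × ℤ | t.2.1 = -1 ∧ t.2.2 = 1}
        ∩ {t : ℤ × ℤ × ℤ | t.1 = 1}) = b := by
      rw [twoPiece_eq, hb_def]
      simp only [Measure.add_apply, Measure.smul_apply, Measure.dirac_apply, smul_eq_mul,
        Set.indicator_apply, Set.mem_setOf_eq, Set.mem_inter_iff]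
      norm_num
    rw [ProbabilityTheory.cond_apply (hS _), ProbabilityTheory.cond_apply (hS _),
      hSval, hc, hsv]
    exact ⟨hSval ▸ hkey1, hkey2 hab, fun _ hlt => hkey3 (hab' hlt)⟩
  · -- bc = 1, bs = -1
    have hSval : twoPiece α β {t : ℤ × ℤ × ℤ | t.2.1 = 1 ∧ t.2.2 = -1} = a + b := by
      rw [twoPiece_eq, ha_def, hb_def]
      simp only [Measure.add_apply, Measure.smul_apply, Measure.dirac_apply, smul_eq_mul,
        Set.indicator_apply, Set.mem_setOf_eq]
      norm_num
    have hc : twoPiece α β ({t : ℤ × ℤ × ℤ | t.2.1 = 1 ∧ t.2.2 = -1}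
        ∩ {t : ℤ × ℤ × ℤ | t.1 = 1}) = a := by
      rw [twoPiece_eq, ha_def]
      simp only [Measure.add_apply, Measure.smul_apply, Measure.dirac_apply, smul_eq_mul,
        Set.indicator_apply, Set.mem_setOf_eq, Set.mem_inter_iff]
      norm_num
    have hsv : twoPiece α β ({t : ℤ × ℤ × ℤ | t.2.1 = 1 ∧ t.2.2 = -1}
        ∩ {t : ℤ × ℤ × ℤ | t.1 = -1}) = b := by
      rw [twoPiece_eq, hb_def]
      simp only [Measure.add_apply, Measure.smul_apply, Measure.dirac_apply, smul_eq_mul,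
        Set.indicator_apply, Set.mem_setOf_eq, Set.mem_inter_iff]
      norm_num
    rw [ProbabilityTheory.cond_apply (hS _), ProbabilityTheory.cond_apply (hS _),
      hSval, hc, hsv]
    exact ⟨hSval ▸ hkey1, hkey2 hab, fun _ hlt => hkey3 (hab' hlt)⟩
  · -- bc = 1, bs = 1
    refine ⟨?_, le_refl _, fun h _ => absurd rfl h⟩
    have : twoPiece α β {t : ℤ × ℤ × ℤ | t.2.1 = 1 ∧ t.2.2 = 1}
        = ENNReal.ofReal β * ENNReal.ofReal α * ENNReal.ofReal (1/2)
          + ENNReal.ofReal (1-β) * ENNReal.ofReal (1-α) * ENNReal.ofReal (1/2) := by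
      rw [twoPiece_eq]
      simp only [Measure.add_apply, Measure.smul_apply, Measure.dirac_apply, smul_eq_mul,
        Set.indicator_apply, Set.mem_setOf_eq]
      norm_num
    rw [this]
    exact lt_of_lt_of_le (hmulpos _ _ hβ0 hα0) le_self_add
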